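/- Let h be a positive integer with gcd(h, q-1) = 1, let s be a positive divisor of q-1, and let g ∈ F_q[x] be such that g(x^s) has no nonzero root in F_q. Then f(x) = x^h (g(x^s))^{(q-1)/s} is a permutation polynomial of F_q. -/

import Mathlib

open Polynomial

lemma pow_inj_aux {F : Type*} [Field F] [Fintype F] (h : ℕ)
    (hgcd : Nat.gcd h (Fintype.card F - 1) = 1)
    {x y : F} (hx : x ≠ 0) (hy : y ≠ 0) (hxy : x ^ h = y ^ h) : x = y := by
  let u := Units.mk0 x hx
  let v := Units.mk0 y hy
  have huv : u ^ h = v ^ h := by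
    ext
    simpa [u, v] using hxy
  have h1 : (u * v⁻¹) ^ h = 1 := by
    rw [mul_pow, huv, inv_pow, mul_inv_cancel]
  have h2 : orderOf (u * v⁻¹) ∣ h := orderOf_dvd_of_pow_eq_one h1
  haveI : DecidableEq F := Classical.decEq F
  have h3 : orderOf (u * v⁻¹) ∣ Fintype.card F - 1 := by
    have := orderOf_dvd_card (x := u * v⁻¹)
    rwa [Fintype.card_units] at this
  have h4 : orderOf (u * v⁻¹) ∣ 1 := hgcd ▸ Nat.dvd_gcd h2 h3
  have h5 : u * v⁻¹ = 1 := orderOf_eq_one_iff.mp (Nat.dvd_one.mp h4)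
  have : u = v := by
    rwa [mul_inv_eq_one] at h5
  have := congrArg Units.val this
  simpa [u, v] using this

theorem pp_of_specific_form {F : Type*} [Field F] [Fintype F]
    (h s : ℕ) (hh : 0 < h) (hgcd : Nat.gcd h (Fintype.card F - 1) = 1)
    (hs : 0 < s) (hdvd : s ∣ Fintype.card F - 1)
    (g : F[X]) (hg : ∀ c : F, c ≠ 0 → g.eval (c ^ s) ≠ 0) :
    Function.Bijective
      (fun c : F =>
        ((X ^ h * (g.comp (X ^ s)) ^ ((Fintype.card F - 1) / s) : F[X])).eval c) := by
  set e := (Fintype.card F - 1) / s with he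
  have hcard : 0 < Fintype.card F - 1 := by
    have := Fintype.one_lt_card (α := F)
    omega
  have hes : e * s = Fintype.card F - 1 := Nat.div_mul_cancel hdvd
  set f : F → F := fun c => c ^ h * (g.eval (c ^ s)) ^ e with hf
  have hsimp : ∀ c : F,
      ((X ^ h * (g.comp (X ^ s)) ^ ((Fintype.card F - 1) / s) : F[X])).eval c = f c := by
    intro c
    simp [f, he, eval_mul, eval_pow, eval_comp]
  have hne : ∀ c : F, c ≠ 0 → f c ≠ 0 := by
    intro c hc
    exact mul_ne_zero (pow_ne_zero _ hc) (pow_ne_zero _ (hg c hc))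
  have hpow : ∀ c : F, c ≠ 0 → (f c) ^ s = (c ^ s) ^ h := by
    intro c hc
    rw [hf]
    simp only
    rw [mul_pow, ← pow_mul, ← pow_mul, hes,
      FiniteField.pow_card_sub_one_eq_one _ (hg c hc), mul_one,
      mul_comm h s, pow_mul]
  have hinj : Function.Injective f := by
    intro a b hab
    by_cases ha : a = 0
    · subst ha
      by_cases hb : b = 0
      · exact hb.symm
      · exfalso
        apply hne b hb
        rw [← hab, hf]
        simp [zero_pow hh.ne']
    · have hb : b ≠ 0 := by
        intro hb
        subst hb
        apply hne a ha
        rw [hab, hf]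
        simp [zero_pow hh.ne']
      have h1 : (a ^ s) ^ h = (b ^ s) ^ h := by
        rw [← hpow a ha, ← hpow b hb, hab]
      have h2 : a ^ s = b ^ s :=
        pow_inj_aux h hgcd (pow_ne_zero _ ha) (pow_ne_zero _ hb) h1
      have h3 : a ^ h = b ^ h := by
        have hgne : (g.eval (a ^ s)) ^ e ≠ 0 := pow_ne_zero _ (hg a ha)
        have : a ^ h * (g.eval (a ^ s)) ^ e = b ^ h * (g.eval (a ^ s)) ^ e := by
          conv_rhs => rw [h2]
          exact hab
        exact mul_right_cancel₀ hgne this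
      exact pow_inj_aux h hgcd ha hb h3
  have : Function.Injective fun c : F =>
      ((X ^ h * (g.comp (X ^ s)) ^ ((Fintype.card F - 1) / s) : F[X])).eval c := by
    intro a b hab
    apply hinj
    have hab' : eval a (X ^ h * g.comp (X ^ s) ^ ((Fintype.card F - 1) / s)) =
        eval b (X ^ h * g.comp (X ^ s) ^ ((Fintype.card F - 1) / s)) := hab
    rw [← hsimp a, ← hsimp b, hab']
  exact Finite.injective_iff_bijective.mp this
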